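/- The clustering inequality Σ_{i∈C_h} y_i ≥ 1 never defines a facet of the GMDTSP polytope P: using the degree equations it is equivalent to x(δ(C_h)) + 2·x(γ(C_h)) ≥ 2, which is dominated by x(δ(C_h)) ≥ 2 when |C_h| ≥ 2, and reduces to the equation x(δ(C_h)) = 2 (an improper face) when |C_h| = 1. -/

import Mathlib

open Finset

/-- A feasible GMDTSP solution: a collection of simple cycles on the complete
target–depot graph (no depot–depot edges), each cycle containing exactly one
depot, visiting at least one target of every cluster.  `x u v` is the number of
times the edge `{u,v}` is used (2 only on degenerate depot–target two-edge
cycles) and `y t` indicates whether target `t` is visited. -/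
structure GMDTSPSol (T D : Type*) [Fintype T] [Fintype D]
    (clusters : Finset (Finset T)) where
  x : (T ⊕ D) → (T ⊕ D) → ℕ
  y : T → ℕ
  symm : ∀ u v, x u v = x v u
  loopless : ∀ u, x u u = 0
  no_depot_depot : ∀ d d' : D, x (Sum.inr d) (Sum.inr d') = 0
  xTT_le_one : ∀ t t' : T, x (Sum.inl t) (Sum.inl t') ≤ 1
  xDT_le_two : ∀ (d : D) (t : T), x (Sum.inr d) (Sum.inl t) ≤ 2
  y_le_one : ∀ t, y t ≤ 1
  degree : ∀ t : T, ∑ v : T ⊕ D, x (Sum.inl t) v = 2 * y t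
  depot_degree : ∀ d : D, ∑ v : T ⊕ D, x (Sum.inr d) v ≤ 2
  connected : ∀ t : T, y t = 1 →
    ∃ d : D, Relation.ReflTransGen (fun u v => 0 < x u v) (Sum.inl t) (Sum.inr d)
  one_depot_per_cycle : ∀ d d' : D, d ≠ d' →
    ¬ Relation.ReflTransGen (fun u v => 0 < x u v) (Sum.inr d) (Sum.inr d')
  covers : ∀ C ∈ clusters, ∃ t ∈ C, y t = 1

/-- `x(δ(S))`: total multiplicity of solution edges crossing the cut `(S, V∖S)`,
for a set `S` of targets. -/
def cutS {T D : Type*} [Fintype T] [DecidableEq T] [Fintype D]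
    {clusters : Finset (Finset T)} (sol : GMDTSPSol T D clusters)
    (S : Finset T) : ℕ :=
  ∑ a ∈ S, ((∑ b ∈ Sᶜ, sol.x (Sum.inl a) (Sum.inl b)) +
    ∑ d : D, sol.x (Sum.inl a) (Sum.inr d))

noncomputable section

/-- The incidence vector `(x, y)` of a feasible GMDTSP solution, viewed as a
point of `ℝ^{E} × ℝ^{T}` (edge coordinates stored symmetrically). -/
def incVec {T D : Type*} [Fintype T] [Fintype D] {clusters : Finset (Finset T)}
    (sol : GMDTSPSol T D clusters) : ((T ⊕ D) → (T ⊕ D) → ℝ) × (T → ℝ) :=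
  (fun u v => (sol.x u v : ℝ), fun t => (sol.y t : ℝ))

/-- `P(F)`: the convex hull of incidence vectors of feasible GMDTSP solutions
satisfying `y_v = 1` for all `v ∈ F`.  The GMDTSP polytope is `P = P(∅)` and
the MDTSP polytope is `Q = P(T)`. -/
def PF (T D : Type*) [Fintype T] [Fintype D] (clusters : Finset (Finset T))
    (F : Finset T) : Set (((T ⊕ D) → (T ⊕ D) → ℝ) × (T → ℝ)) :=
  convexHull ℝ
    {p | ∃ sol : GMDTSPSol T D clusters, (∀ v ∈ F, sol.y v = 1) ∧ p = incVec sol}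

/-- The dimension of a set: the dimension of its affine hull. -/
def dimOf {T D : Type*} [Fintype T] [Fintype D]
    (s : Set (((T ⊕ D) → (T ⊕ D) → ℝ) × (T → ℝ))) : ℕ :=
  Module.finrank ℝ (affineSpan ℝ s).direction

/-- The inequality `f p ≥ b` is valid for `P` and defines a facet of `P`. -/
def IsFacetGe {T D : Type*} [Fintype T] [Fintype D]
    (f : ((T ⊕ D) → (T ⊕ D) → ℝ) × (T → ℝ) → ℝ) (b : ℝ)
    (P : Set (((T ⊕ D) → (T ⊕ D) → ℝ) × (T → ℝ))) : Prop :=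
  (∀ p ∈ P, b ≤ f p) ∧ dimOf {p ∈ P | f p = b} = dimOf P - 1

/-- The inequality `f p ≤ b` is valid for `P` and defines a facet of `P`. -/
def IsFacetLe {T D : Type*} [Fintype T] [Fintype D]
    (f : ((T ⊕ D) → (T ⊕ D) → ℝ) × (T → ℝ) → ℝ) (b : ℝ)
    (P : Set (((T ⊕ D) → (T ⊕ D) → ℝ) × (T → ℝ))) : Prop :=
  (∀ p ∈ P, f p ≤ b) ∧ dimOf {p ∈ P | f p = b} = dimOf P - 1


set_option linter.unusedSectionVars false
set_option maxHeartbeats 1000000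

namespace ClusterAux


variable {T D : Type*} [Fintype T] [DecidableEq T] [Fintype D]

noncomputable def cvtx (d0 : D) {n : ℕ} (σ : Fin n → T) (k : ZMod (n + 1)) : T ⊕ D :=
  if _h : k.val = 0 then Sum.inr d0 else
    Sum.inl (σ ⟨k.val - 1, by have := ZMod.val_lt k; omega⟩)

variable {d0 : D} {n : ℕ} {σ : Fin n → T}

lemma cvtx_eq_inr_iff {k : ZMod (n+1)} {d : D} :
    cvtx d0 σ k = Sum.inr d ↔ k = 0 ∧ d = d0 := by
  unfold cvtx
  split_ifs with h
  · simp only [Sum.inr.injEq]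
    constructor
    · rintro rfl
      exact ⟨by rwa [ZMod.val_eq_zero] at h, rfl⟩
    · exact fun h => h.2.symm
  · simp only [reduceCtorEq, false_iff, not_and]
    intro hk
    exact absurd (by simp [hk]) h

lemma cvtx_eq_inl_iff {k : ZMod (n+1)} {t : T} :
    cvtx d0 σ k = Sum.inl t ↔
      ∃ p : Fin n, σ p = t ∧ k = ((p.val + 1 : ℕ) : ZMod (n+1)) := by
  unfold cvtx
  split_ifs with h
  · simp only [reduceCtorEq, false_iff, not_exists, not_and]
    rintro p hp rfl
    rw [ZMod.val_natCast_of_lt (by have := p.isLt; omega)] at h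
    omega
  · simp only [Sum.inl.injEq]
    constructor
    · rintro rfl
      refine ⟨_, rfl, ?_⟩
      have hlt := ZMod.val_lt k
      have : k.val - 1 + 1 = k.val := by omega
      rw [this, ZMod.natCast_rightInverse k]
    · rintro ⟨p, rfl, rfl⟩
      have hv : (((p : ℕ) + 1 : ℕ) : ZMod (n+1)).val = (p : ℕ) + 1 :=
        ZMod.val_natCast_of_lt (by have := p.isLt; omega)
      congr 1
      apply Fin.ext
      show ((((p : ℕ) + 1 : ℕ)) : ZMod (n+1)).val - 1 = (p : ℕ)
      omega

lemma cvtx_natCast_succ (p : Fin n) :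
    cvtx d0 σ ((p.val + 1 : ℕ) : ZMod (n+1)) = Sum.inl (σ p) :=
  cvtx_eq_inl_iff.mpr ⟨p, rfl, rfl⟩

lemma cvtx_zero : cvtx d0 σ (0 : ZMod (n+1)) = Sum.inr d0 :=
  cvtx_eq_inr_iff.mpr ⟨rfl, rfl⟩

lemma cvtx_inj (hσ : Function.Injective σ) : Function.Injective (cvtx d0 σ) := by
  intro k k' h
  apply ZMod.val_injective
  unfold cvtx at h
  rcases Nat.eq_zero_or_pos k.val with h1 | h1 <;> rcases Nat.eq_zero_or_pos k'.val with h2 | h2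
  · omega
  · rw [dif_pos h1, dif_neg (by omega)] at h; exact absurd h (by simp)
  · rw [dif_neg (by omega), dif_pos h2] at h; exact absurd h (by simp)
  · rw [dif_neg (by omega), dif_neg (by omega)] at h
    have h3 : k.val - 1 = k'.val - 1 := congrArg Fin.val (hσ (Sum.inl.inj h))
    omega

lemma succ_ne (hn : 2 ≤ n) (k : ZMod (n+1)) : k + 1 ≠ k := by
  intro h
  have h1 : (1 : ZMod (n+1)) = 0 := by
    have h2 : k + 1 = k + 0 := by rw [add_zero]; exact h
    exact add_left_cancel h2
  haveI : Fact (1 < n + 1) := ⟨by omega⟩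
  have := congrArg ZMod.val h1
  rw [ZMod.val_one, ZMod.val_zero] at this
  omega

lemma two_ne_zero' (hn : 2 ≤ n) : ((2 : ℕ) : ZMod (n+1)) ≠ 0 := by
  intro h
  rw [ZMod.natCast_eq_zero_iff] at h
  exact absurd (Nat.le_of_dvd (by norm_num) h) (by omega)

open Classical in
noncomputable def cycX (d0 : D) {n : ℕ} (σ : Fin n → T) (u v : T ⊕ D) : ℕ :=
  (Finset.univ.filter fun k : ZMod (n + 1) =>
    s(cvtx d0 σ k, cvtx d0 σ (k + 1)) = s(u, v)).card


section Counting

variable (hn : 2 ≤ n) (hσ : Function.Injective σ)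
include hn hσ

lemma cycX_symm (u v : T ⊕ D) : cycX d0 σ u v = cycX d0 σ v u := by
  classical
  unfold cycX
  congr 1
  ext k
  simp only [mem_filter, mem_univ, true_and, Sym2.eq_iff]
  tauto

lemma cycX_loopless (u : T ⊕ D) : cycX d0 σ u u = 0 := by
  classical
  unfold cycX
  rw [Finset.card_eq_zero, Finset.filter_eq_empty_iff]
  intro k _
  rw [Sym2.eq_iff]
  rintro (⟨h1, h2⟩ | ⟨h1, h2⟩) <;>
    exact succ_ne hn k (cvtx_inj hσ (h2.trans h1.symm))

lemma cycX_no_dd (d d' : D) : cycX d0 σ (Sum.inr d) (Sum.inr d') = 0 := by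
  classical
  unfold cycX
  rw [Finset.card_eq_zero, Finset.filter_eq_empty_iff]
  intro k _
  rw [Sym2.eq_iff]
  rintro (⟨h1, h2⟩ | ⟨h1, h2⟩) <;>
  · rw [cvtx_eq_inr_iff] at h1 h2
    obtain ⟨rfl, _⟩ := h1
    exact succ_ne hn 0 (by rw [h2.1])

lemma cycX_TT_le_one (t t' : T) : cycX d0 σ (Sum.inl t) (Sum.inl t') ≤ 1 := by
  classical
  unfold cycX
  rw [Finset.card_le_one]
  intro k hk k' hk'
  simp only [Finset.mem_filter, Finset.mem_univ, true_and, Sym2.eq_iff] at hk hk'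
  have key : ∀ a b : ZMod (n+1), a + 1 = b → b + 1 = a → False := by
    intro a b e1 e2
    have e3 : a + 2 = a := by
      rw [show a + (2:ZMod (n+1)) = a + 1 + 1 by ring, e1, e2]
    have e4 : ((2:ℕ) : ZMod (n+1)) = 0 := by
      have : a + ((2:ℕ) : ZMod (n+1)) = a + 0 := by rw [add_zero]; exact_mod_cast e3
      exact add_left_cancel this
    exact two_ne_zero' hn e4
  rcases hk with ⟨h1, h2⟩ | ⟨h1, h2⟩ <;> rcases hk' with ⟨h1', h2'⟩ | ⟨h1', h2'⟩
  · exact cvtx_inj hσ (h1.trans h1'.symm)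
  · exact (key k k' (cvtx_inj hσ (h2.trans h1'.symm)) (cvtx_inj hσ (h2'.trans h1.symm))).elim
  · exact (key k' k (cvtx_inj hσ (h2'.trans h1.symm)) (cvtx_inj hσ (h2.trans h1'.symm))).elim
  · exact cvtx_inj hσ (h1.trans h1'.symm)

lemma cycX_DT_le_two (d : D) (t : T) : cycX d0 σ (Sum.inr d) (Sum.inl t) ≤ 2 := by
  classical
  unfold cycX
  have hsub : (Finset.univ.filter fun k : ZMod (n + 1) =>
      s(cvtx d0 σ k, cvtx d0 σ (k + 1)) = s(Sum.inr d, Sum.inl t)) ⊆ {0, -1} := by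
    intro k hk
    simp only [mem_filter, mem_univ, true_and, Sym2.eq_iff] at hk
    simp only [mem_insert, mem_singleton]
    rcases hk with ⟨h1, _⟩ | ⟨_, h2⟩
    · left; exact (cvtx_eq_inr_iff.mp h1).1
    · right
      have : k + 1 = 0 := (cvtx_eq_inr_iff.mp h2).1
      linear_combination this
  calc _ ≤ ({0, -1} : Finset (ZMod (n+1))).card := Finset.card_le_card hsub
    _ ≤ 2 := by
      refine le_trans (Finset.card_insert_le _ _) ?_
      simp

open Classical in
lemma sum_cycX (u : T ⊕ D) :
    ∑ v : T ⊕ D, cycX d0 σ u v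
      = 2 * (Finset.univ.filter fun k : ZMod (n+1) => cvtx d0 σ k = u).card := by
  classical
  have key : ∀ k : ZMod (n+1),
      ((Finset.univ : Finset (T ⊕ D)).filter
          fun v => s(cvtx d0 σ k, cvtx d0 σ (k+1)) = s(u, v)).card
        = (if cvtx d0 σ k = u then 1 else 0) + (if cvtx d0 σ (k+1) = u then 1 else 0) := by
    intro k
    have hkk : cvtx d0 σ k ≠ cvtx d0 σ (k+1) := fun h => succ_ne hn k (cvtx_inj hσ h.symm)
    by_cases h1 : cvtx d0 σ k = u
    · rw [if_pos h1, if_neg (fun h => hkk (h1.trans h.symm))]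
      have : ((Finset.univ : Finset (T ⊕ D)).filter
          fun v => s(cvtx d0 σ k, cvtx d0 σ (k+1)) = s(u, v)) = {cvtx d0 σ (k+1)} := by
        ext v
        simp only [mem_filter, mem_univ, true_and, mem_singleton, Sym2.eq_iff]
        constructor
        · rintro (⟨_, hb⟩ | ⟨ha, hb⟩)
          · exact hb.symm
          · exact absurd (hb.trans h1.symm) (Ne.symm hkk)
        · rintro rfl; exact Or.inl ⟨h1, rfl⟩
      rw [this, Finset.card_singleton]
    · rw [if_neg h1]
      by_cases h2 : cvtx d0 σ (k+1) = u
      · rw [if_pos h2]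
        have : ((Finset.univ : Finset (T ⊕ D)).filter
            fun v => s(cvtx d0 σ k, cvtx d0 σ (k+1)) = s(u, v)) = {cvtx d0 σ k} := by
          ext v
          simp only [mem_filter, mem_univ, true_and, mem_singleton, Sym2.eq_iff]
          constructor
          · rintro (⟨ha, _⟩ | ⟨ha, _⟩)
            · exact absurd ha h1
            · exact ha.symm
          · rintro rfl; exact Or.inr ⟨rfl, h2⟩
        rw [this, Finset.card_singleton]
      · rw [if_neg h2]
        rw [Finset.card_eq_zero, Finset.filter_eq_empty_iff]
        intro v _
        rw [Sym2.eq_iff]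
        rintro (⟨ha, _⟩ | ⟨_, hb⟩)
        · exact h1 ha
        · exact h2 hb
  unfold cycX
  calc ∑ v : T ⊕ D, ((Finset.univ : Finset (ZMod (n+1))).filter
        fun k => s(cvtx d0 σ k, cvtx d0 σ (k + 1)) = s(u, v)).card
      = ∑ v : T ⊕ D, ∑ k : ZMod (n+1),
          if s(cvtx d0 σ k, cvtx d0 σ (k+1)) = s(u, v) then 1 else 0 := by
        refine Finset.sum_congr rfl fun v _ => Finset.card_filter _ _
    _ = ∑ k : ZMod (n+1), ∑ v : T ⊕ D,
          if s(cvtx d0 σ k, cvtx d0 σ (k+1)) = s(u, v) then 1 else 0 := Finset.sum_comm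
    _ = ∑ k : ZMod (n+1),
          ((if cvtx d0 σ k = u then 1 else 0) + (if cvtx d0 σ (k+1) = u then 1 else 0)) := by
        refine Finset.sum_congr rfl fun k _ => ?_
        rw [← key k, Finset.card_filter]
    _ = (Finset.univ.filter fun k : ZMod (n+1) => cvtx d0 σ k = u).card
        + (Finset.univ.filter fun k : ZMod (n+1) => cvtx d0 σ (k+1) = u).card := by
        rw [Finset.sum_add_distrib, Finset.card_filter, Finset.card_filter]
    _ = 2 * (Finset.univ.filter fun k : ZMod (n+1) => cvtx d0 σ k = u).card := by
        have hshift : (Finset.univ.filter fun k : ZMod (n+1) => cvtx d0 σ (k+1) = u).card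
            = (Finset.univ.filter fun k : ZMod (n+1) => cvtx d0 σ k = u).card := by
          refine Finset.card_bij' (fun k _ => k + 1) (fun k _ => k - 1) ?_ ?_ ?_ ?_
          · intro a ha; simp only [mem_filter, mem_univ, true_and] at ha ⊢; exact ha
          · intro a ha; simp only [mem_filter, mem_univ, true_and] at ha ⊢
            rw [sub_add_cancel]; exact ha
          · intro a _; ring
          · intro a _; ring
        omega


open Classical in
lemma card_cvtx_inl (t : T) :
    (Finset.univ.filter fun k : ZMod (n+1) => cvtx d0 σ k = Sum.inl t).card
      = if t ∈ Set.range σ then 1 else 0 := by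
  classical
  split_ifs with h
  · obtain ⟨p, rfl⟩ := h
    rw [Finset.card_eq_one]
    refine ⟨((p.val + 1 : ℕ) : ZMod (n+1)), ?_⟩
    ext k
    simp only [mem_filter, mem_univ, true_and, mem_singleton, cvtx_eq_inl_iff]
    constructor
    · rintro ⟨q, hq, rfl⟩
      rw [hσ hq]
    · rintro rfl; exact ⟨p, rfl, rfl⟩
  · rw [Finset.card_eq_zero, Finset.filter_eq_empty_iff]
    intro k _
    rw [cvtx_eq_inl_iff]
    rintro ⟨p, hp, _⟩
    exact h ⟨p, hp⟩

open Classical in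
lemma card_cvtx_inr (d : D) :
    (Finset.univ.filter fun k : ZMod (n+1) => cvtx d0 σ k = Sum.inr d).card ≤ 1 := by
  classical
  rw [Finset.card_le_one]
  intro k hk k' hk'
  simp only [mem_filter, mem_univ, true_and, cvtx_eq_inr_iff] at hk hk'
  rw [hk.1, hk'.1]

lemma cycX_pos_adj (p q : Fin n) (hq : (q : ℕ) = (p : ℕ) + 1) :
    cycX d0 σ (Sum.inl (σ p)) (Sum.inl (σ q)) = 1 := by
  have hle := cycX_TT_le_one hn hσ (σ p) (σ q) (d0 := d0)
  have hpos : 0 < cycX d0 σ (Sum.inl (σ p)) (Sum.inl (σ q)) := by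
    classical
    unfold cycX
    rw [Finset.card_pos]
    refine ⟨((p.val + 1 : ℕ) : ZMod (n+1)), ?_⟩
    simp only [mem_filter, mem_univ, true_and]
    rw [Sym2.eq_iff]
    left
    refine ⟨cvtx_natCast_succ p, ?_⟩
    have h2 : ((p.val + 1 : ℕ) : ZMod (n+1)) + 1 = ((q.val + 1 : ℕ) : ZMod (n+1)) := by
      rw [hq]; push_cast; ring
    rw [h2]
    exact cvtx_natCast_succ q
  omega

lemma cycX_eq_zero_nonadj (p q : Fin n) (h1 : (q : ℕ) ≠ (p : ℕ) + 1)
    (h2 : (p : ℕ) ≠ (q : ℕ) + 1) :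
    cycX d0 σ (Sum.inl (σ p)) (Sum.inl (σ q)) = 0 := by
  classical
  unfold cycX
  rw [Finset.card_eq_zero, Finset.filter_eq_empty_iff]
  intro k _
  rw [Sym2.eq_iff]
  have main : ∀ a b : Fin n, (a : ℕ) ≠ (b : ℕ) + 1 →
      ¬(cvtx d0 σ k = Sum.inl (σ b) ∧ cvtx d0 σ (k+1) = Sum.inl (σ a)) := by
    rintro a b hab ⟨ha, hb⟩
    rw [cvtx_eq_inl_iff] at ha hb
    obtain ⟨pb, hpb, rfl⟩ := ha
    obtain ⟨pa, hpa, hk1⟩ := hb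
    have eb : (pb : ℕ) = (b : ℕ) := congrArg Fin.val (hσ hpb)
    have ea : (pa : ℕ) = (a : ℕ) := congrArg Fin.val (hσ hpa)
    have hval : (((pb : ℕ) + 2 : ℕ) : ZMod (n+1)) = (((pa : ℕ) + 1 : ℕ) : ZMod (n+1)) := by
      rw [← hk1]; push_cast; ring
    have hval2 := congrArg ZMod.val hval
    rw [ZMod.val_natCast, ZMod.val_natCast] at hval2
    have hb2 := pb.isLt
    have ha2 := pa.isLt
    rcases Nat.lt_or_ge ((pb : ℕ) + 2) (n+1) with hlt | hge
    · rw [Nat.mod_eq_of_lt hlt, Nat.mod_eq_of_lt (by omega)] at hval2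
      omega
    · have hbn : (pb : ℕ) + 2 = n + 1 := by omega
      rw [hbn, Nat.mod_self, Nat.mod_eq_of_lt (by omega)] at hval2
      omega
  rintro (hcase | hcase)
  · exact main q p h1 hcase
  · exact main p q h2 hcase

lemma cycX_eq_zero_of_not_mem (u : T ⊕ D) (t : T) (h : t ∉ Set.range σ) :
    cycX d0 σ u (Sum.inl t) = 0 := by
  classical
  unfold cycX
  rw [Finset.card_eq_zero, Finset.filter_eq_empty_iff]
  intro k _
  rw [Sym2.eq_iff]
  rintro (⟨_, hb⟩ | ⟨hb, _⟩) <;>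
  · rw [cvtx_eq_inl_iff] at hb
    obtain ⟨p, hp, _⟩ := hb
    exact h ⟨p, hp⟩

lemma cycX_step (k : ZMod (n+1)) : 0 < cycX d0 σ (cvtx d0 σ k) (cvtx d0 σ (k+1)) := by
  classical
  unfold cycX
  rw [Finset.card_pos]
  exact ⟨k, by simp⟩

lemma cyc_reach (k : ZMod (n+1)) (j : ℕ) :
    Relation.ReflTransGen (fun u v => 0 < cycX d0 σ u v)
      (cvtx d0 σ k) (cvtx d0 σ (k + (j : ZMod (n+1)))) := by
  induction j with
  | zero => simpa using Relation.ReflTransGen.refl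
  | succ m ih =>
    refine ih.tail ?_
    have h2 : k + ((m + 1 : ℕ) : ZMod (n+1)) = (k + (m : ℕ)) + 1 := by push_cast; ring
    rw [h2]
    exact cycX_step hn hσ _

lemma cyc_reach_zero (k : ZMod (n+1)) :
    Relation.ReflTransGen (fun u v => 0 < cycX d0 σ u v) (cvtx d0 σ k) (Sum.inr d0) := by
  have h := cyc_reach hn hσ (d0 := d0) k ((n+1) - k.val)
  have hval : ((k.val : ℕ) : ZMod (n+1)) = k := ZMod.natCast_rightInverse k
  have h0 : k + ((((n+1) - k.val : ℕ)) : ZMod (n+1)) = 0 := by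
    rw [Nat.cast_sub (ZMod.val_lt k).le, ZMod.natCast_self, hval]
    ring
  rw [h0, cvtx_zero] at h
  exact h

lemma cycX_support {u v : T ⊕ D} (h : 0 < cycX d0 σ u v) :
    u ∈ Set.range (cvtx d0 σ) ∧ v ∈ Set.range (cvtx d0 σ) := by
  classical
  unfold cycX at h
  rw [Finset.card_pos] at h
  obtain ⟨k, hk⟩ := h
  simp only [mem_filter, mem_univ, true_and, Sym2.eq_iff] at hk
  rcases hk with ⟨h1, h2⟩ | ⟨h1, h2⟩
  exacts [⟨⟨k, h1⟩, ⟨k+1, h2⟩⟩, ⟨⟨k+1, h2⟩, ⟨k, h1⟩⟩]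

lemma range_cvtx_inr {d : D} (h : Sum.inr d ∈ Set.range (cvtx (σ := σ) d0)) : d = d0 := by
  obtain ⟨k, hk⟩ := h
  exact (cvtx_eq_inr_iff.mp hk).2


end Counting

open Classical in
noncomputable def cycSol (clusters : Finset (Finset T)) (d0 : D) {n : ℕ} (hn : 2 ≤ n)
    (σ : Fin n → T) (hσ : Function.Injective σ)
    (hcov : ∀ C ∈ clusters, ∃ t ∈ C, t ∈ Set.range σ) : GMDTSPSol T D clusters where
  x := cycX d0 σ
  y := fun t => if t ∈ Set.range σ then 1 else 0
  symm := cycX_symm hn hσ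
  loopless := cycX_loopless hn hσ
  no_depot_depot := cycX_no_dd hn hσ
  xTT_le_one := cycX_TT_le_one hn hσ
  xDT_le_two := cycX_DT_le_two hn hσ
  y_le_one := fun t => by split_ifs <;> omega
  degree := fun t => by
    classical
    rw [sum_cycX hn hσ, card_cvtx_inl hn hσ]
  depot_degree := fun d => by
    classical
    rw [sum_cycX hn hσ]
    have := card_cvtx_inr hn hσ (d0 := d0) d
    omega
  connected := fun t ht => by
    refine ⟨d0, ?_⟩
    split_ifs at ht with h
    · obtain ⟨p, rfl⟩ := h
      have h2 := cyc_reach_zero hn hσ (d0 := d0) ((p.val + 1 : ℕ) : ZMod (n+1))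
      rwa [cvtx_natCast_succ] at h2
  one_depot_per_cycle := fun d d' hdd hpath => by
    have hd : d = d0 := by
      rcases Relation.ReflTransGen.cases_head hpath with heq | ⟨c, hstep, _⟩
      · exact absurd (Sum.inr.inj heq) hdd
      · exact range_cvtx_inr hn hσ (cycX_support hn hσ hstep).1
    have hd' : d' = d0 := by
      rcases Relation.ReflTransGen.cases_tail hpath with heq | ⟨c, _, hstep⟩
      · exact absurd (Sum.inr.inj heq.symm) hdd
      · exact range_cvtx_inr hn hσ (cycX_support hn hσ hstep).2
    exact hdd (hd.trans hd'.symm)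
  covers := fun Cl hCl => by
    obtain ⟨t, htC, htr⟩ := hcov Cl hCl
    exact ⟨t, htC, if_pos htr⟩




noncomputable def fLin {T D : Type*} [Fintype T] [Fintype D] (C : Finset T) :
    (((T ⊕ D) → (T ⊕ D) → ℝ) × (T → ℝ)) →ₗ[ℝ] ℝ where
  toFun p := ∑ i ∈ C, p.2 i
  map_add' p q := by simp [Finset.sum_add_distrib]
  map_smul' c p := by simp [Finset.mul_sum]

def gLin {T D : Type*} [Fintype T] [Fintype D] (a b : T ⊕ D) :
    (((T ⊕ D) → (T ⊕ D) → ℝ) × (T → ℝ)) →ₗ[ℝ] ℝ where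
  toFun p := p.1 a b
  map_add' p q := rfl
  map_smul' c p := rfl

lemma dir_le_ker {E : Type*} [AddCommGroup E] [Module ℝ E]
    (f : E →ₗ[ℝ] ℝ) (c : ℝ) (s : Set E) (hs : ∀ p ∈ s, f p = c) :
    (affineSpan ℝ s).direction ≤ LinearMap.ker f := by
  rw [direction_affineSpan, vectorSpan_def, Submodule.span_le]
  intro v hv
  rw [Set.mem_vsub] at hv
  obtain ⟨a, ha, b, hb, rfl⟩ := hv
  simp [LinearMap.mem_ker, vsub_eq_sub, map_sub, hs a ha, hs b hb]

section Sols

variable {T D : Type*} [Fintype T] [DecidableEq T] [Fintype D]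

lemma exists_two_sols (clusters : Finset (Finset T))
    (hnonempty : ∀ Cl ∈ clusters, Cl.Nonempty) (d0 : D)
    (hn : 3 ≤ Fintype.card T) (i0 j0 : T) (hij : i0 ≠ j0) :
    ∃ sA sB : GMDTSPSol T D clusters,
      (∀ t, sA.y t = 1) ∧ (∀ t, sB.y t = 1) ∧
      sA.x (Sum.inl i0) (Sum.inl j0) = 1 ∧ sB.x (Sum.inl i0) (Sum.inl j0) = 0 := by
  classical
  set n := Fintype.card T with hndef
  have hn2 : 2 ≤ n := by omega
  let c : Fin n ≃ T := (Fintype.equivFin T).symm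
  let p0 : Fin n := ⟨0, by omega⟩
  let p1 : Fin n := ⟨1, by omega⟩
  let pl : Fin n := ⟨n - 1, by omega⟩
  have hp01 : p0 ≠ p1 := by simp [p0, p1, Fin.ext_iff]
  have hp0l : p0 ≠ pl := by simp [p0, pl, Fin.ext_iff]; omega
  let dA : Fin n ≃ T := c.trans (Equiv.swap (c p0) i0)
  have hdA0 : dA p0 = i0 := by
    simp only [dA, Equiv.trans_apply]
    exact Equiv.swap_apply_left _ _
  let σA : Fin n ≃ T := dA.trans (Equiv.swap (dA p1) j0)
  have hA0 : σA p0 = i0 := by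
    simp only [σA, Equiv.trans_apply]
    rw [Equiv.swap_apply_of_ne_of_ne (fun h => hp01 (dA.injective h))
      (by rw [hdA0]; exact hij)]
    exact hdA0
  have hA1 : σA p1 = j0 := by
    simp only [σA, Equiv.trans_apply]
    exact Equiv.swap_apply_left _ _
  let σB : Fin n ≃ T := dA.trans (Equiv.swap (dA pl) j0)
  have hB0 : σB p0 = i0 := by
    simp only [σB, Equiv.trans_apply]
    rw [Equiv.swap_apply_of_ne_of_ne (fun h => hp0l (dA.injective h))
      (by rw [hdA0]; exact hij)]
    exact hdA0
  have hBl : σB pl = j0 := by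
    simp only [σB, Equiv.trans_apply]
    exact Equiv.swap_apply_left _ _
  have covA : ∀ Cl ∈ clusters, ∃ t ∈ Cl, t ∈ Set.range (⇑σA) := by
    intro Cl hCl
    obtain ⟨t, ht⟩ := hnonempty Cl hCl
    exact ⟨t, ht, ⟨σA.symm t, σA.apply_symm_apply t⟩⟩
  have covB : ∀ Cl ∈ clusters, ∃ t ∈ Cl, t ∈ Set.range (⇑σB) := by
    intro Cl hCl
    obtain ⟨t, ht⟩ := hnonempty Cl hCl
    exact ⟨t, ht, ⟨σB.symm t, σB.apply_symm_apply t⟩⟩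
  have h1 : ∀ t, (cycSol (D := D) clusters d0 hn2 (⇑σA) σA.injective covA).y t = 1 := by
    intro t
    show (if t ∈ Set.range (⇑σA) then 1 else 0 : ℕ) = 1
    rw [if_pos ⟨σA.symm t, σA.apply_symm_apply t⟩]
  have h2 : ∀ t, (cycSol (D := D) clusters d0 hn2 (⇑σB) σB.injective covB).y t = 1 := by
    intro t
    show (if t ∈ Set.range (⇑σB) then 1 else 0 : ℕ) = 1
    rw [if_pos ⟨σB.symm t, σB.apply_symm_apply t⟩]
  have h3 : (cycSol (D := D) clusters d0 hn2 (⇑σA) σA.injective covA).x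
      (Sum.inl i0) (Sum.inl j0) = 1 := by
    show cycX d0 (⇑σA) (Sum.inl i0) (Sum.inl j0) = 1
    rw [← hA0, ← hA1]
    exact cycX_pos_adj hn2 σA.injective p0 p1 (by simp [p0, p1])
  have h4 : (cycSol (D := D) clusters d0 hn2 (⇑σB) σB.injective covB).x
      (Sum.inl i0) (Sum.inl j0) = 0 := by
    show cycX d0 (⇑σB) (Sum.inl i0) (Sum.inl j0) = 0
    rw [← hB0, ← hBl]
    refine cycX_eq_zero_nonadj hn2 σB.injective p0 pl ?_ ?_
    · show (n : ℕ) - 1 ≠ (0 : ℕ) + 1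
      omega
    · show (0 : ℕ) ≠ ((n : ℕ) - 1) + 1
      omega
  exact ⟨_, _, h1, h2, h3, h4⟩

lemma exists_third_sol (clusters : Finset (Finset T))
    (hdisj : ∀ Cl ∈ clusters, ∀ Cl' ∈ clusters, Cl ≠ Cl' → Disjoint Cl Cl')
    (hnonempty : ∀ Cl ∈ clusters, Cl.Nonempty) (d0 : D)
    (hn : 3 ≤ Fintype.card T) (C : Finset T) (hC : C ∈ clusters)
    (i0 j0 : T) (hi0 : i0 ∈ C) (hj0 : j0 ∈ C) (hij : i0 ≠ j0) :
    ∃ sC : GMDTSPSol T D clusters,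
      (∀ t, sC.y t = if t = j0 then 0 else 1) ∧
      sC.x (Sum.inl i0) (Sum.inl j0) = 0 := by
  classical
  set n := Fintype.card T with hndef
  have hn2 : 2 ≤ n := by omega
  let c : Fin n ≃ T := (Fintype.equivFin T).symm
  let p0 : Fin n := ⟨0, by omega⟩
  let pl : Fin n := ⟨n - 1, by omega⟩
  have hp0l : p0 ≠ pl := by simp [p0, pl, Fin.ext_iff]; omega
  let dA : Fin n ≃ T := c.trans (Equiv.swap (c p0) i0)
  have hdA0 : dA p0 = i0 := by
    simp only [dA, Equiv.trans_apply]
    exact Equiv.swap_apply_left _ _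
  let σB : Fin n ≃ T := dA.trans (Equiv.swap (dA pl) j0)
  have hB0 : σB p0 = i0 := by
    simp only [σB, Equiv.trans_apply]
    rw [Equiv.swap_apply_of_ne_of_ne (fun h => hp0l (dA.injective h))
      (by rw [hdA0]; exact hij)]
    exact hdA0
  have hBl : σB pl = j0 := by
    simp only [σB, Equiv.trans_apply]
    exact Equiv.swap_apply_left _ _
  have hm2 : 2 ≤ n - 1 := by omega
  let σC : Fin (n - 1) → T := fun i => σB (Fin.castLE (by omega) i)
  have hσC : Function.Injective σC := by
    intro a b h
    have h2 := σB.injective h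
    exact Fin.castLE_injective _ h2
  have hrange : ∀ t : T, t ∈ Set.range σC ↔ t ≠ j0 := by
    intro t
    constructor
    · rintro ⟨i, rfl⟩ h
      have hne : Fin.castLE (by omega : n - 1 ≤ n) i ≠ pl := by
        intro he
        have h3 := congrArg Fin.val he
        simp only [Fin.coe_castLE] at h3
        have := i.isLt
        simp only [pl] at h3
        omega
      exact hne (σB.injective (h.trans hBl.symm))
    · intro ht
      have hk : σB.symm t ≠ pl := by
        intro he
        apply ht
        rw [← hBl, ← he, σB.apply_symm_apply]
      have hklt : ((σB.symm t : Fin n) : ℕ) < n - 1 := by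
        have h1 := (σB.symm t).isLt
        have h2 : ((σB.symm t : Fin n) : ℕ) ≠ n - 1 := by
          intro h
          exact hk (Fin.ext (by simp [pl, h]))
        omega
      refine ⟨⟨((σB.symm t : Fin n) : ℕ), hklt⟩, ?_⟩
      show σB (Fin.castLE _ ⟨((σB.symm t : Fin n) : ℕ), hklt⟩) = t
      have h4 : Fin.castLE (by omega : n - 1 ≤ n) ⟨((σB.symm t : Fin n) : ℕ), hklt⟩
          = σB.symm t := Fin.ext rfl
      rw [h4, σB.apply_symm_apply]
  have covC : ∀ Cl ∈ clusters, ∃ t ∈ Cl, t ∈ Set.range σC := by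
    intro Cl hCl
    by_cases hjin : j0 ∈ Cl
    · have hClC : Cl = C := by
        by_contra hne
        exact (Finset.disjoint_left.mp (hdisj Cl hCl C hC hne) hjin) hj0
      exact ⟨i0, hClC ▸ hi0, (hrange i0).mpr hij⟩
    · obtain ⟨t, ht⟩ := hnonempty Cl hCl
      exact ⟨t, ht, (hrange t).mpr (fun h => hjin (h ▸ ht))⟩
  have h1 : ∀ t, (cycSol (D := D) clusters d0 hm2 σC hσC covC).y t
      = if t = j0 then 0 else 1 := by
    intro t
    show (if t ∈ Set.range σC then 1 else 0 : ℕ) = _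
    by_cases ht : t = j0
    · rw [if_pos ht, if_neg (fun h => ((hrange t).mp h) ht)]
    · rw [if_neg ht, if_pos ((hrange t).mpr ht)]
  have h2 : (cycSol (D := D) clusters d0 hm2 σC hσC covC).x
      (Sum.inl i0) (Sum.inl j0) = 0 := by
    show cycX d0 σC (Sum.inl i0) (Sum.inl j0) = 0
    exact cycX_eq_zero_of_not_mem hm2 hσC _ j0 (fun h => ((hrange j0).mp h) rfl)
  exact ⟨_, h1, h2⟩

end Sols

end ClusterAux

/-- The clustering inequality `Σ_{i∈C_h} y_i ≥ 1` never
defines a facet of the GMDTSP polytope `P = P(∅)`, for any cluster `C_h`. -/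
theorem cluster_ineq_not_facet {T D : Type*} [Fintype T] [DecidableEq T]
    [Fintype D] [Nonempty D] (clusters : Finset (Finset T))
    (hcover : ∀ t : T, ∃ C ∈ clusters, t ∈ C)
    (hdisj : ∀ C ∈ clusters, ∀ C' ∈ clusters, C ≠ C' → Disjoint C C')
    (hnonempty : ∀ C ∈ clusters, C.Nonempty)
    (hn : 3 ≤ Fintype.card T)
    (C : Finset T) (hC : C ∈ clusters) :
    ¬ IsFacetGe (fun p => ∑ i ∈ C, p.2 i) 1 (PF T D clusters ∅) := by
  classical
  rintro ⟨hvalid, hdim⟩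
  obtain ⟨d0⟩ := ‹Nonempty D›
  have hmemP : ∀ sol : GMDTSPSol T D clusters, incVec sol ∈ PF T D clusters ∅ :=
    fun sol => subset_convexHull ℝ _ ⟨sol, fun v hv => absurd hv (Finset.notMem_empty v), rfl⟩
  have hmemSpan : ∀ sol : GMDTSPSol T D clusters,
      incVec sol ∈ affineSpan ℝ (PF T D clusters ∅) :=
    fun sol => subset_affineSpan ℝ _ (hmemP sol)
  have hCne := hnonempty C hC
  have hCpos : 0 < C.card := Finset.Nonempty.card_pos hCne
  rcases lt_or_ge 1 C.card with hC2 | hC1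
  · -- case |C| ≥ 2
    obtain ⟨i0, hi0, j0, hj0, hij⟩ := Finset.one_lt_card.mp hC2
    obtain ⟨sA, sB, hyA, hyB, hxA, hxB⟩ :=
      ClusterAux.exists_two_sols clusters hnonempty d0 hn i0 j0 hij
    obtain ⟨sC, hyC, hxC⟩ :=
      ClusterAux.exists_third_sol clusters hdisj hnonempty d0 hn C hC i0 j0 hi0 hj0 hij
    set F := ClusterAux.fLin (T := T) (D := D) C with hFdef
    set G := ClusterAux.gLin (T := T) (D := D) (Sum.inl i0) (Sum.inl j0) with hGdef
    -- facts on the generating set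
    have hSQ : ∀ q ∈ {p | ∃ sol : GMDTSPSol T D clusters,
        (∀ v ∈ (∅ : Finset T), sol.y v = 1) ∧ p = incVec sol},
        G q + 1 ≤ F q ∧ 0 ≤ G q := by
      rintro q ⟨sol, -, rfl⟩
      have hkey : sol.x (Sum.inl i0) (Sum.inl j0) + 1 ≤ ∑ i ∈ C, sol.y i := by
        rcases Nat.eq_zero_or_pos (sol.x (Sum.inl i0) (Sum.inl j0)) with hz | hp
        · obtain ⟨t, htC, hyt⟩ := sol.covers C hC
          have := Finset.single_le_sum (f := sol.y) (fun i _ => Nat.zero_le _) htC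
          omega
        · have hxle := sol.xTT_le_one i0 j0
          have hyi : sol.y i0 = 1 := by
            by_contra hne
            have hy0 : sol.y i0 = 0 := by have := sol.y_le_one i0; omega
            have hdeg := sol.degree i0
            rw [hy0, Nat.mul_zero] at hdeg
            exact absurd (Finset.sum_eq_zero_iff.mp hdeg (Sum.inl j0) (Finset.mem_univ _))
              (by omega)
          have hyj : sol.y j0 = 1 := by
            by_contra hne
            have hy0 : sol.y j0 = 0 := by have := sol.y_le_one j0; omega
            have hdeg := sol.degree j0
            rw [hy0, Nat.mul_zero] at hdeg
            have h0 := Finset.sum_eq_zero_iff.mp hdeg (Sum.inl i0) (Finset.mem_univ _)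
            rw [sol.symm (Sum.inl i0) (Sum.inl j0)] at hp
            omega
          have hsub : ({i0, j0} : Finset T) ⊆ C := by
            intro t htm
            rcases Finset.mem_insert.mp htm with rfl | h
            · exact hi0
            · rw [Finset.mem_singleton] at h
              subst h
              exact hj0
          have hsum2 : sol.y i0 + sol.y j0 ≤ ∑ i ∈ C, sol.y i := by
            have h2 := Finset.sum_le_sum_of_subset (f := sol.y) hsub
            rwa [Finset.sum_pair hij] at h2
          omega
      constructor
      · show (sol.x (Sum.inl i0) (Sum.inl j0) : ℝ) + 1 ≤ ∑ i ∈ C, (sol.y i : ℝ)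
        rw [← Nat.cast_sum]
        exact_mod_cast hkey
      · exact Nat.cast_nonneg _
    have hGF : ∀ p ∈ PF T D clusters ∅, G p + 1 ≤ F p := by
      intro p hp
      have hsub : PF T D clusters ∅ ⊆ {p | (1 : ℝ) ≤ (F - G) p} := by
        apply convexHull_min ?_ (convex_halfSpace_ge (LinearMap.isLinear (F - G)) 1)
        intro q hq
        have h1 := (hSQ q hq).1
        simp only [Set.mem_setOf_eq, LinearMap.sub_apply]
        linarith
      have h2 := hsub hp
      simp only [Set.mem_setOf_eq, LinearMap.sub_apply] at h2
      linarith
    have hG0 : ∀ p ∈ PF T D clusters ∅, 0 ≤ G p := by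
      intro p hp
      have hsub : PF T D clusters ∅ ⊆ {p | (0 : ℝ) ≤ G p} :=
        convexHull_min (fun q hq => (hSQ q hq).2)
          (convex_halfSpace_ge (LinearMap.isLinear G) 0)
      exact hsub hp
    set Pface := {p ∈ PF T D clusters ∅ | (fun p => ∑ i ∈ C, p.2 i) p = 1} with hPfdef
    have hfaceF : ∀ p ∈ Pface, F p = 1 := fun p hp => hp.2
    have hfaceG : ∀ p ∈ Pface, G p = 0 := by
      intro p hp
      have h1 := hGF p hp.1
      have h2 := hG0 p hp.1
      have h3 := hfaceF p hp
      linarith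
    have hdirV : (affineSpan ℝ Pface).direction ≤ (affineSpan ℝ (PF T D clusters ∅)).direction :=
      AffineSubspace.direction_le (affineSpan_mono ℝ (Set.sep_subset _ _))
    have hdirF : (affineSpan ℝ Pface).direction ≤ LinearMap.ker F :=
      ClusterAux.dir_le_ker F 1 Pface hfaceF
    have hdirG : (affineSpan ℝ Pface).direction ≤ LinearMap.ker G :=
      ClusterAux.dir_le_ker G 0 Pface hfaceG
    set V := (affineSpan ℝ (PF T D clusters ∅)).direction with hVdef
    have huA : incVec sA - incVec sB ∈ V := by
      have h := AffineSubspace.vsub_mem_direction (hmemSpan sA) (hmemSpan sB)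
      rwa [vsub_eq_sub] at h
    have huC : incVec sC - incVec sB ∈ V := by
      have h := AffineSubspace.vsub_mem_direction (hmemSpan sC) (hmemSpan sB)
      rwa [vsub_eq_sub] at h
    have hFA : F (incVec sA) = (C.card : ℝ) := by
      show ∑ i ∈ C, ((sA.y i : ℕ) : ℝ) = _
      simp [hyA]
    have hFB : F (incVec sB) = (C.card : ℝ) := by
      show ∑ i ∈ C, ((sB.y i : ℕ) : ℝ) = _
      simp [hyB]
    have hFC : F (incVec sC) = (C.card : ℝ) - 1 := by
      show ∑ i ∈ C, ((sC.y i : ℕ) : ℝ) = _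
      have h1 : ∀ i ∈ C, ((sC.y i : ℕ) : ℝ) = 1 - (if i = j0 then (1 : ℝ) else 0) := by
        intro i _
        rw [hyC i]
        split_ifs <;> norm_num
      rw [Finset.sum_congr rfl h1, Finset.sum_sub_distrib, Finset.sum_const,
        Finset.sum_ite_eq' C j0 (fun _ => (1 : ℝ)), if_pos hj0]
      simp
    have hGA : G (incVec sA) = 1 := by
      show ((sA.x (Sum.inl i0) (Sum.inl j0) : ℕ) : ℝ) = 1
      rw [hxA]; norm_num
    have hGB : G (incVec sB) = 0 := by
      show ((sB.x (Sum.inl i0) (Sum.inl j0) : ℕ) : ℝ) = 0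
      rw [hxB]; norm_num
    have hGC : G (incVec sC) = 0 := by
      show ((sC.x (Sum.inl i0) (Sum.inl j0) : ℕ) : ℝ) = 0
      rw [hxC]; norm_num
    set φ := F.prod G with hφdef
    set ψ := φ.domRestrict V with hψdef
    have hφA : φ (incVec sA - incVec sB) = ((0 : ℝ), (1 : ℝ)) := by
      have h : φ (incVec sA - incVec sB)
          = (F (incVec sA) - F (incVec sB), G (incVec sA) - G (incVec sB)) := by
        simp [hφdef, LinearMap.prod_apply, map_sub]
      rw [h, hFA, hFB, hGA, hGB]
      norm_num
    have hφC : φ (incVec sC - incVec sB) = ((-1 : ℝ), (0 : ℝ)) := by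
      have h : φ (incVec sC - incVec sB)
          = (F (incVec sC) - F (incVec sB), G (incVec sC) - G (incVec sB)) := by
        simp [hφdef, LinearMap.prod_apply, map_sub]
      rw [h, hFC, hFB, hGC, hGB]
      norm_num
    have hrange : LinearMap.range ψ = ⊤ := by
      rw [eq_top_iff]
      rintro ⟨a, b⟩ -
      refine ⟨b • (⟨_, huA⟩ : V) + (-a) • (⟨_, huC⟩ : V), ?_⟩
      have h : ψ (b • (⟨_, huA⟩ : V) + (-a) • (⟨_, huC⟩ : V))
          = b • φ (incVec sA - incVec sB) + (-a) • φ (incVec sC - incVec sB) := by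
        simp [hψdef, LinearMap.domRestrict_apply, map_add, map_smul]
      rw [h, hφA, hφC]
      ext <;> simp
    have hrn := LinearMap.finrank_range_add_finrank_ker ψ
    rw [hrange, finrank_top] at hrn
    have hRR : Module.finrank ℝ (ℝ × ℝ) = 2 := by
      rw [Module.finrank_prod, Module.finrank_self]
    rw [hRR] at hrn
    have hle : Module.finrank ℝ (affineSpan ℝ Pface).direction
        ≤ Module.finrank ℝ (LinearMap.ker ψ) := by
      have hsub2 : (affineSpan ℝ Pface).direction
          ≤ Submodule.map V.subtype (LinearMap.ker ψ) := by
        intro v hv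
        refine ⟨⟨v, hdirV hv⟩, LinearMap.mem_ker.mpr ?_, rfl⟩
        show φ v = 0
        have h1 : F v = 0 := hdirF hv
        have h2 : G v = 0 := hdirG hv
        have h3 : φ v = (F v, G v) := rfl
        rw [h3, h1, h2]
        rfl
      calc Module.finrank ℝ (affineSpan ℝ Pface).direction
          ≤ Module.finrank ℝ (Submodule.map V.subtype (LinearMap.ker ψ)) :=
            Submodule.finrank_mono hsub2
        _ = Module.finrank ℝ (LinearMap.ker ψ) := Submodule.finrank_map_subtype_eq V _
    unfold dimOf at hdim
    rw [← hVdef] at hdim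
    omega
  · -- case |C| = 1
    have hc1 : C.card = 1 := by omega
    obtain ⟨c0, rfl⟩ := Finset.card_eq_one.mp hc1
    have hall : ∀ p ∈ PF T D clusters ∅, ∑ i ∈ ({c0} : Finset T), p.2 i = 1 := by
      intro p hp
      have hsub : PF T D clusters ∅
          ⊆ {p | ClusterAux.fLin (T := T) (D := D) ({c0} : Finset T) p = 1} := by
        apply convexHull_min ?_ (convex_hyperplane (LinearMap.isLinear _) 1)
        rintro q ⟨sol, -, rfl⟩
        show ∑ i ∈ ({c0} : Finset T), ((sol.y i : ℕ) : ℝ) = 1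
        obtain ⟨t, htm, hyt⟩ := sol.covers {c0} hC
        rw [Finset.mem_singleton] at htm
        subst htm
        rw [Finset.sum_singleton, hyt, Nat.cast_one]
      exact hsub hp
    have hset : {p ∈ PF T D clusters ∅ | (fun p => ∑ i ∈ ({c0} : Finset T), p.2 i) p = 1}
        = PF T D clusters ∅ := by
      ext p
      exact ⟨fun hp => hp.1, fun hp => ⟨hp, hall p hp⟩⟩
    rw [hset] at hdim
    have hdp : dimOf (T := T) (D := D) (PF T D clusters ∅) = 0 := by omega
    obtain ⟨i0, j0, hij⟩ := Fintype.exists_pair_of_one_lt_card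
      (show 1 < Fintype.card T by omega)
    obtain ⟨sA, sB, hyA, hyB, hxA, hxB⟩ :=
      ClusterAux.exists_two_sols clusters hnonempty d0 hn i0 j0 hij
    have hne : incVec sA ≠ incVec sB := by
      intro h
      have h2 := congrFun (congrFun (congrArg Prod.fst h) (Sum.inl i0)) (Sum.inl j0)
      simp only [incVec] at h2
      rw [hxA, hxB] at h2
      norm_num at h2
    have hu : incVec sA - incVec sB ∈ (affineSpan ℝ (PF T D clusters ∅)).direction := by
      have h := AffineSubspace.vsub_mem_direction (hmemSpan sA) (hmemSpan sB)
      rwa [vsub_eq_sub] at h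
    unfold dimOf at hdp
    rw [Submodule.finrank_eq_zero] at hdp
    rw [hdp, Submodule.mem_bot] at hu
    exact hne (sub_eq_zero.mp hu)
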